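/- Under the same hypotheses, if |y(t)| ≤ ε on [t0, t0+T] and L ∈ (0, T], then for all t ∈ [t0+L, t0+T], |u(t)| ≤ Δ + L·B + ε·(1 + e^{kL})/(L·min{1, e^{kL}}). -/

import Mathlib

/-- Intermediate estimate in the small-gain lemma for `y' = k y + u + d`: if
`|y| ≤ ε` on `[t0, t0+T]` and `L ∈ (0, T]`, then for all `t ∈ [t0+L, t0+T]`,
`|u(t)| ≤ Δ + L B + ε (1 + e^{kL}) / (L min{1, e^{kL}})`. -/
theorem stmt_2
    (k t0 T L ε B Δ : ℝ) (u u' d y : ℝ → ℝ)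
    (hu : ∀ t, t0 ≤ t → HasDerivAt u (u' t) t)
    (hu'cont : ContinuousOn u' (Set.Ici t0))
    (hd : ContinuousOn d (Set.Ici t0))
    (huB : ∀ t, t0 ≤ t → |u t| ≤ B)
    (hu'B : ∀ t, t0 ≤ t → |u' t| ≤ B)
    (hdΔ : ∀ t, t0 ≤ t → |d t| ≤ Δ)
    (hy : ∀ t, t0 ≤ t → HasDerivAt y (k * y t + u t + d t) t)
    (hL : 0 < L) (hLT : L ≤ T)
    (hybnd : ∀ t ∈ Set.Icc t0 (t0 + T), |y t| ≤ ε) :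
    ∀ t ∈ Set.Icc (t0 + L) (t0 + T),
      |u t| ≤ Δ + L * B
        + ε * (1 + Real.exp (k * L)) / (L * min 1 (Real.exp (k * L))) := by
  intro t ht
  obtain ⟨ht1, ht2⟩ := ht
  set a := t - L with ha
  have hat0 : t0 ≤ a := by simp only [ha]; linarith
  have hat : a ≤ t := by linarith
  have htt0 : t0 ≤ t := by linarith
  set m := min 1 (Real.exp (k * L)) with hm
  have hmpos : 0 < m := lt_min one_pos (Real.exp_pos _)
  have hεnn : 0 ≤ ε := (abs_nonneg _).trans (hybnd t0 ⟨le_refl _, by linarith⟩)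
  have hmem : ∀ x ∈ Set.Icc a t, t0 ≤ x := fun x hx => hat0.trans hx.1
  -- continuity of u on [a,t]
  have hucont : ContinuousOn u (Set.Icc a t) := fun x hx =>
    ((hu x (hmem x hx)).continuousAt).continuousWithinAt
  have hdcont : ContinuousOn d (Set.Icc a t) :=
    hd.mono (fun x hx => hmem x hx)
  have hecont : ContinuousOn (fun τ => Real.exp (-k * τ)) (Set.Icc a t) :=
    (Real.continuous_exp.comp (continuous_const.mul continuous_id)).continuousOn
  have huIcc : Set.uIcc a t = Set.Icc a t := Set.uIcc_of_le hat
  -- integrability facts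
  have hint1 : IntervalIntegrable (fun τ => Real.exp (-k * τ) * (u τ + d τ))
      MeasureTheory.volume a t := by
    apply ContinuousOn.intervalIntegrable
    rw [huIcc]
    exact hecont.mul (hucont.add hdcont)
  have hint2 : IntervalIntegrable (fun τ => u t * Real.exp (-k * τ))
      MeasureTheory.volume a t := by
    apply ContinuousOn.intervalIntegrable
    rw [huIcc]
    exact continuousOn_const.mul hecont
  have hint3 : IntervalIntegrable (fun τ => Real.exp (-k * τ) * (u τ - u t + d τ))
      MeasureTheory.volume a t := by
    apply ContinuousOn.intervalIntegrable
    rw [huIcc]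
    exact hecont.mul ((hucont.sub continuousOn_const).add hdcont)
  have hintE : IntervalIntegrable (fun τ => Real.exp (-k * τ))
      MeasureTheory.volume a t := by
    apply ContinuousOn.intervalIntegrable
    rw [huIcc]
    exact hecont
  -- derivative of y τ * exp(-k τ)
  have hg : ∀ x ∈ Set.uIcc a t, HasDerivAt (fun τ => y τ * Real.exp (-k * τ))
      (Real.exp (-k * x) * (u x + d x)) x := by
    intro x hx
    rw [huIcc] at hx
    have h2 : HasDerivAt (fun τ => Real.exp (-k * τ)) (Real.exp (-k * x) * (-k)) x := by
      have := ((hasDerivAt_id x).const_mul (-k)).exp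
      simpa using this
    have h3 : HasDerivAt (fun τ => y τ * Real.exp (-k * τ)) _ x := (hy x (hmem x hx)).mul h2
    convert h3 using 1
    ring
  have hFTC : ∫ τ in a..t, Real.exp (-k * τ) * (u τ + d τ)
      = y t * Real.exp (-k * t) - y a * Real.exp (-k * a) :=
    intervalIntegral.integral_eq_sub_of_hasDerivAt hg hint1
  set I := ∫ τ in a..t, Real.exp (-k * τ) with hI
  set J := ∫ τ in a..t, Real.exp (-k * τ) * (u τ - u t + d τ) with hJ
  have hsplit : y t * Real.exp (-k * t) - y a * Real.exp (-k * a) = u t * I + J := by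
    rw [← hFTC, hI, hJ, ← intervalIntegral.integral_const_mul,
      ← intervalIntegral.integral_add hint2 hint3]
    apply intervalIntegral.integral_congr
    intro x hx
    ring
  -- pointwise lower bound for exp(-kτ)
  have hptlb : ∀ x ∈ Set.Icc a t, Real.exp (-k * t) * m ≤ Real.exp (-k * x) := by
    intro x hx
    have h1 : m ≤ Real.exp (k * (t - x)) := by
      rcases le_or_gt 0 k with hk | hk
      · exact (min_le_left _ _).trans (by
          rw [← Real.exp_zero]
          exact Real.exp_le_exp.mpr (by nlinarith [hx.2]))
      · exact (min_le_right _ _).trans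
          (Real.exp_le_exp.mpr (by nlinarith [hx.1, hx.2, ha]))
    calc Real.exp (-k * t) * m ≤ Real.exp (-k * t) * Real.exp (k * (t - x)) :=
          mul_le_mul_of_nonneg_left h1 (Real.exp_pos _).le
      _ = Real.exp (-k * x) := by rw [← Real.exp_add]; ring_nf
  -- lower bound on I
  have hIlb : L * (Real.exp (-k * t) * m) ≤ I := by
    have h := intervalIntegral.integral_mono_on hat
      (intervalIntegrable_const (c := Real.exp (-k * t) * m)) hintE hptlb
    rw [intervalIntegral.integral_const, smul_eq_mul] at h
    have hta : t - a = L := by rw [ha]; ring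
    rw [hI]
    calc L * (Real.exp (-k * t) * m) = (t - a) * (Real.exp (-k * t) * m) := by
          rw [hta]
      _ ≤ _ := h
  have hIpos : 0 < I :=
    lt_of_lt_of_le (by positivity) hIlb
  -- bound on |u τ - u t|
  have hlip : ∀ x ∈ Set.Icc a t, |u x - u t| ≤ L * B := by
    intro x hx
    have hderiv : ∀ z ∈ Set.Icc a t, HasDerivWithinAt u (u' z) (Set.Icc a t) z :=
      fun z hz => (hu z (hmem z hz)).hasDerivWithinAt
    have hbd : ∀ z ∈ Set.Icc a t, ‖u' z‖ ≤ B := fun z hz => hu'B z (hmem z hz)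
    have := (convex_Icc a t).norm_image_sub_le_of_norm_hasDerivWithin_le hderiv hbd
      (Set.right_mem_Icc.mpr hat) hx
    rw [Real.norm_eq_abs, Real.norm_eq_abs] at this
    calc |u x - u t| ≤ B * |x - t| := this
      _ ≤ B * L := by
          apply mul_le_mul_of_nonneg_left _ ((abs_nonneg (u' t)).trans (hu'B t htt0))
          have hx1 : t - L ≤ x := by rw [← ha]; exact hx.1
          rw [abs_sub_comm, abs_of_nonneg (by linarith [hx.2])]
          linarith
      _ = L * B := mul_comm _ _
  -- bound on |J|
  have hJbd : |J| ≤ (L * B + Δ) * I := by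
    have habs : |J| ≤ ∫ τ in a..t, Real.exp (-k * τ) * (L * B + Δ) := by
      rw [hJ]
      apply intervalIntegral.abs_integral_le_integral_abs hat |>.trans
      apply intervalIntegral.integral_mono_on hat hint3.abs
      · apply ContinuousOn.intervalIntegrable
        rw [huIcc]
        exact hecont.mul continuousOn_const
      · intro x hx
        rw [abs_mul, abs_of_nonneg (Real.exp_pos _).le]
        apply mul_le_mul_of_nonneg_left _ (Real.exp_pos _).le
        calc |u x - u t + d x| ≤ |u x - u t| + |d x| := abs_add_le _ _
          _ ≤ L * B + Δ := add_le_add (hlip x hx) (hdΔ x (hmem x hx))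
    calc |J| ≤ ∫ τ in a..t, Real.exp (-k * τ) * (L * B + Δ) := habs
      _ = (L * B + Δ) * I := by
          rw [hI, ← intervalIntegral.integral_const_mul]
          apply intervalIntegral.integral_congr
          intro x hx; ring
  -- main inequality: |u t| * I ≤ (Δ + L B) * I + ε e^{-kt}(1 + e^{kL})
  have hmain : |u t| * I ≤ (Δ + L * B) * I
      + ε * (Real.exp (-k * t) * (1 + Real.exp (k * L))) := by
    have h1 : u t * I = (y t * Real.exp (-k * t) - y a * Real.exp (-k * a)) - J := by
      rw [hsplit]; ring
    have h2 : |u t * I| ≤ |y t| * Real.exp (-k * t) + |y a| * Real.exp (-k * a) + |J| := by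
      rw [h1]
      calc |y t * Real.exp (-k * t) - y a * Real.exp (-k * a) - J|
          ≤ |y t * Real.exp (-k * t) - y a * Real.exp (-k * a)| + |J| := abs_sub _ _
        _ ≤ |y t * Real.exp (-k * t)| + |y a * Real.exp (-k * a)| + |J| := by
            gcongr; exact abs_sub _ _
        _ = |y t| * Real.exp (-k * t) + |y a| * Real.exp (-k * a) + |J| := by
            rw [abs_mul, abs_mul, abs_of_nonneg (Real.exp_pos (-k*t)).le,
              abs_of_nonneg (Real.exp_pos (-k*a)).le]
    have hya : |y a| ≤ ε := hybnd a ⟨hat0, by simp only [ha]; linarith⟩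
    have hyt : |y t| ≤ ε := hybnd t ⟨htt0, ht2⟩
    have hea : Real.exp (-k * a) = Real.exp (-k * t) * Real.exp (k * L) := by
      rw [← Real.exp_add]; congr 1; rw [ha]; ring
    have h3 : |u t| * I = |u t * I| := by
      rw [abs_mul, abs_of_pos hIpos]
    rw [h3]
    calc |u t * I| ≤ |y t| * Real.exp (-k * t) + |y a| * Real.exp (-k * a) + |J| := h2
      _ ≤ ε * Real.exp (-k * t) + ε * Real.exp (-k * a) + (L * B + Δ) * I := by
          have h1 := mul_le_mul_of_nonneg_right hyt (Real.exp_pos (-k*t)).le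
          have h2 := mul_le_mul_of_nonneg_right hya (Real.exp_pos (-k*a)).le
          linarith [hJbd]
      _ = (Δ + L * B) * I + ε * (Real.exp (-k * t) * (1 + Real.exp (k * L))) := by
          rw [hea]; ring
  -- conclude
  have hkey : (|u t| - (Δ + L * B)) * (L * m) ≤ ε * (1 + Real.exp (k * L)) := by
    have hE : 0 < Real.exp (-k * t) := Real.exp_pos _
    have h4 : (|u t| - (Δ + L * B)) * I ≤ ε * (Real.exp (-k * t) * (1 + Real.exp (k * L))) := by
      nlinarith [hmain]
    rcases le_or_gt (|u t|) (Δ + L * B) with hc | hc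
    · have hnn : 0 ≤ ε * (1 + Real.exp (k * L)) := by positivity
      have hLm : 0 < L * m := mul_pos hL hmpos
      nlinarith
    · have h5 : (|u t| - (Δ + L * B)) * (L * (Real.exp (-k * t) * m))
          ≤ (|u t| - (Δ + L * B)) * I :=
        mul_le_mul_of_nonneg_left hIlb (by linarith)
      have h6 : (|u t| - (Δ + L * B)) * (L * m) * Real.exp (-k * t)
          ≤ ε * (1 + Real.exp (k * L)) * Real.exp (-k * t) := by
        nlinarith [h5, h4]
      exact le_of_mul_le_mul_right h6 hE
  have hfin : |u t| - (Δ + L * B) ≤ ε * (1 + Real.exp (k * L)) / (L * m) := by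
    rw [le_div_iff₀ (by positivity : (0:ℝ) < L * m)]
    exact hkey
  linarith
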